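/- With the block recursion Y_{k+1} = [[0, Y_k],[Y_k, γT_k]], Z_{k+1} = [[0, Z_k],[Z_k, γS_k]] where Y_k, Z_k, T_k, S_k ≥ 0 entrywise, γ > 0, (I - Y_kZ_k)⁻¹ ≥ 0, (I - Z_kY_k)⁻¹ ≥ 0 entrywise, and additionally M := I - Y_kZ_k - γ² T_k(I - Z_kY_k)⁻¹S_k is invertible with M⁻¹ ≥ 0 entrywise, the matrix I - Y_{k+1}Z_{k+1} is invertible with entrywise nonnegative inverse; hence it is a nonsingular M-matrix. -/

import Mathlib

open Matrix

lemma mul_nn {n m k : Type*} [Fintype m] (P : Matrix n m ℝ) (Q : Matrix m k ℝ)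
    (hP : ∀ i j, 0 ≤ P i j) (hQ : ∀ i j, 0 ≤ Q i j) : ∀ i j, 0 ≤ (P * Q) i j := by
  intro i j
  simp only [Matrix.mul_apply]
  exact Finset.sum_nonneg fun x _ => mul_nonneg (hP i x) (hQ x j)

theorem stmt5 {r : ℕ} (Y Z T S : Matrix (Fin r) (Fin r) ℝ) (γ : ℝ) (hγ : 0 < γ)
    (hY : ∀ i j, 0 ≤ Y i j) (hZ : ∀ i j, 0 ≤ Z i j)
    (hT : ∀ i j, 0 ≤ T i j) (hS : ∀ i j, 0 ≤ S i j)
    (h1 : IsUnit (1 - Y * Z)) (h2 : IsUnit (1 - Z * Y))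
    (h1n : ∀ i j, 0 ≤ (1 - Y * Z)⁻¹ i j) (h2n : ∀ i j, 0 ≤ (1 - Z * Y)⁻¹ i j)
    (M : Matrix (Fin r) (Fin r) ℝ)
    (hM : M = 1 - Y * Z - (γ ^ 2) • (T * (1 - Z * Y)⁻¹ * S))
    (hMu : IsUnit M) (hMn : ∀ i j, 0 ≤ M⁻¹ i j)
    (Y' Z' : Matrix (Fin r ⊕ Fin r) (Fin r ⊕ Fin r) ℝ)
    (hY' : Y' = Matrix.fromBlocks 0 Y Y (γ • T))
    (hZ' : Z' = Matrix.fromBlocks 0 Z Z (γ • S)) :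
    IsUnit (1 - Y' * Z') ∧ (∀ i j, 0 ≤ (1 - Y' * Z')⁻¹ i j) := by
  set A : Matrix (Fin r) (Fin r) ℝ := 1 - Y * Z with hA
  have hAdet : IsUnit A.det := (Matrix.isUnit_iff_isUnit_det A).mp h1
  have hAA : A * A⁻¹ = 1 := Matrix.mul_nonsing_inv A hAdet
  have hMdet : IsUnit M.det := (Matrix.isUnit_iff_isUnit_det M).mp hMu
  have hMM : M * M⁻¹ = 1 := Matrix.mul_nonsing_inv M hMdet
  have hAinv : ∀ Q : Matrix (Fin r) (Fin r) ℝ, A * (A⁻¹ * Q) = Q := fun Q => by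
    rw [← Matrix.mul_assoc, hAA, Matrix.one_mul]
  have hMinv : ∀ Q : Matrix (Fin r) (Fin r) ℝ, M * (M⁻¹ * Q) = Q := fun Q => by
    rw [← Matrix.mul_assoc, hMM, Matrix.one_mul]
  -- key identity
  have hid : (1 - Z * Y)⁻¹ = 1 + Z * A⁻¹ * Y := by
    apply Matrix.inv_eq_right_inv
    have e1 : (1 - Z * Y) * (1 + Z * A⁻¹ * Y) = 1 - Z * Y + Z * ((A * A⁻¹) * Y) := by
      rw [hA]; noncomm_ring
    rw [e1, hAA]; noncomm_ring
  have hD : A - (γ ^ 2) • (T * S) = M + (γ ^ 2) • (T * (Z * A⁻¹ * Y) * S) := by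
    rw [hM, hid]
    rw [Matrix.mul_add, Matrix.add_mul, smul_add, Matrix.mul_one]
    abel
  -- block form of 1 - Y'Z'
  have hE : 1 - Y' * Z' = Matrix.fromBlocks A (-(γ • (Y * S))) (-(γ • (T * Z)))
      (A - (γ ^ 2) • (T * S)) := by
    rw [hY', hZ', Matrix.fromBlocks_multiply, ← Matrix.fromBlocks_one, sub_eq_add_neg,
      Matrix.fromBlocks_neg, Matrix.fromBlocks_add, Matrix.fromBlocks_inj]
    refine ⟨?_, ?_, ?_, ?_⟩ <;> simp [hA, Matrix.smul_mul, Matrix.mul_smul, smul_smul, sq,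
      sub_eq_add_neg] <;> abel
  set X : Matrix (Fin r) (Fin r) ℝ := T * Z * A⁻¹ with hX'
  set W : Matrix (Fin r) (Fin r) ℝ := Y * S with hW'
  set N : Matrix (Fin r ⊕ Fin r) (Fin r ⊕ Fin r) ℝ :=
    Matrix.fromBlocks (A⁻¹ + (γ ^ 2) • (A⁻¹ * W * M⁻¹ * X)) (γ • (A⁻¹ * W * M⁻¹))
      (γ • (M⁻¹ * X)) M⁻¹ with hN
  have key : (1 - Y' * Z') * N = 1 := by
    rw [hE, hN, Matrix.fromBlocks_multiply, ← Matrix.fromBlocks_one, Matrix.fromBlocks_inj]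
    refine ⟨?_, ?_, ?_, ?_⟩
    · simp only [Matrix.mul_add, Matrix.mul_smul, Matrix.smul_mul, Matrix.neg_mul,
        smul_smul, Matrix.mul_assoc, hAinv, hAA, hW', hX']
      module
    · simp only [Matrix.mul_smul, Matrix.smul_mul, Matrix.neg_mul,
        smul_smul, Matrix.mul_assoc, hAinv, hW']
      module
    · simp only [hD, Matrix.mul_add, Matrix.add_mul, Matrix.mul_smul, Matrix.smul_mul,
        Matrix.neg_mul, smul_smul, Matrix.mul_assoc, hAinv, hMinv, hW', hX']
      module
    · simp only [hD, Matrix.mul_add, Matrix.add_mul, Matrix.mul_smul, Matrix.smul_mul,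
        Matrix.neg_mul, smul_smul, Matrix.mul_assoc, hAinv, hMinv, hMM, hW', hX']
      module
  have hEu : IsUnit (1 - Y' * Z') := (Matrix.isUnit_iff_isUnit_det _).mpr (Matrix.isUnit_det_of_right_inverse key)
  have hEinv : (1 - Y' * Z')⁻¹ = N := Matrix.inv_eq_right_inv key
  refine ⟨hEu, ?_⟩
  rw [hEinv, hN]
  have hX : ∀ i j, 0 ≤ X i j := mul_nn _ _ (mul_nn _ _ hT hZ) h1n
  have hW : ∀ i j, 0 ≤ W i j := mul_nn _ _ hY hS
  rintro (i|i) (j|j) <;>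
    simp only [Matrix.fromBlocks_apply₁₁, Matrix.fromBlocks_apply₁₂,
      Matrix.fromBlocks_apply₂₁, Matrix.fromBlocks_apply₂₂, Matrix.add_apply,
      Matrix.smul_apply, smul_eq_mul]
  · exact add_nonneg (h1n i j) (mul_nonneg (sq_nonneg γ)
      (mul_nn _ _ (mul_nn _ _ (mul_nn _ _ h1n hW) hMn) hX i j))
  · exact mul_nonneg hγ.le (mul_nn _ _ (mul_nn _ _ h1n hW) hMn i j)
  · exact mul_nonneg hγ.le (mul_nn _ _ hMn hX i j)
  · exact hMn i j
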